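/- Every filtered λ-ring structure R on ℤ[x]/(x³) is isomorphic either to a structure S((c_p)) of the form ψ_p(x) = c_p x² with c₂ ≡ 1 (mod 2) and c_p ≡ 0 (mod p) for all primes p > 2, or to a structure S((b_p), k) of the form ψ_p(x) = b_p x + (k·b_p(b_p − 1)/G) x², where (b_p) satisfies condition (A), G is the gcd of {b_p(b_p − 1) : p prime}, and k is an odd integer with 1 ≤ k ≤ G/2 divisible by every condition-(B) prime for (b_p). -/

import Mathlib

open Polynomial

noncomputable section
open Pointwise

/-- The truncated polynomial ring `ℤ[x]/(xⁿ)`. -/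
abbrev TP (n : ℕ) : Type := Polynomial ℤ ⧸ Ideal.span {(X : Polynomial ℤ) ^ n}

/-- The class of `x` in `ℤ[x]/(xⁿ)`. -/
def xx (n : ℕ) : TP n := Ideal.Quotient.mk _ (X : Polynomial ℤ)

/-- A filtered λ-ring structure on `ℤ[x]/(xⁿ)`, presented (via Wilkerson's theorem) as a
family of Adams operations `ψ p`, indexed by the primes `p`: each `ψ p` is a ring
endomorphism preserving the filtration ideal `(x)`, they pairwise commute, and
`ψ p r ≡ r ^ p (mod p)`. -/
structure AdamsFamily (n : ℕ) : Type where
  ψ : Nat.Primes → (TP n →+* TP n)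
  maps_ideal : ∀ (p : Nat.Primes), ∀ a ∈ Ideal.span {xx n}, ψ p a ∈ Ideal.span {xx n}
  comm : ∀ p q : Nat.Primes, (ψ p).comp (ψ q) = (ψ q).comp (ψ p)
  frob : ∀ (p : Nat.Primes) (a : TP n),
    ψ p a - a ^ (p : ℕ) ∈ Ideal.span {((p : ℕ) : TP n)}

/-- Isomorphism of filtered λ-ring structures on `ℤ[x]/(xⁿ)`: a filtration-preserving ring
automorphism intertwining the Adams operations. -/
def AdamsIso {n : ℕ} (R S : AdamsFamily n) : Prop :=
  ∃ σ : TP n ≃+* TP n,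
    (Ideal.span {xx n}).map σ.toRingHom = Ideal.span {xx n} ∧
    ∀ p : Nat.Primes, σ.toRingHom.comp (R.ψ p) = (S.ψ p).comp σ.toRingHom

/-- The prime 2 as an element of `Nat.Primes`. -/
def P2 : Nat.Primes := ⟨2, Nat.prime_two⟩

/-- The prime 3 as an element of `Nat.Primes`. -/
def P3 : Nat.Primes := ⟨3, Nat.prime_three⟩

/-- Condition (A) for a sequence of integers indexed by the primes. -/
def CondA (b : Nat.Primes → ℤ) : Prop :=
  b P2 ≠ 0 ∧ (∀ p : Nat.Primes, ((p : ℕ) : ℤ) ∣ b p) ∧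
    ∀ p : Nat.Primes, 2 < (p : ℕ) →
      (2 : ℤ) ^ padicValInt 2 (b P2) ∣ b p * (b p - 1)

/-- `p` is a condition-(B) prime for the sequence `b`. -/
def CondBPrime (b : Nat.Primes → ℤ) (p : Nat.Primes) : Prop :=
  2 < (p : ℕ) ∧ b p ≠ 0 ∧
    padicValInt (p : ℕ) (b p) =
      sInf {m : ℕ | ∃ q : Nat.Primes, b q ≠ 0 ∧ m = padicValInt (p : ℕ) (b q * (b q - 1))}

lemma span_range_eq_span_abs_gen (f : Nat.Primes → ℤ) :
    ∃ G : ℤ, 0 ≤ G ∧ Ideal.span (Set.range f) = Ideal.span {G} := by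
  obtain ⟨g, hg⟩ := (IsPrincipalIdealRing.principal (Ideal.span (Set.range f)))
  refine ⟨(g.natAbs : ℤ), Int.ofNat_nonneg _, ?_⟩
  rw [hg]
  exact Ideal.span_singleton_eq_span_singleton.mpr (Int.associated_natAbs g)

lemma one_mem_span_range_m {G : ℤ} (hG : G ≠ 0) (m : Nat.Primes → ℤ)
    (h : Ideal.span (Set.range fun p => G * m p) = Ideal.span {G}) :
    (1 : ℤ) ∈ Ideal.span (Set.range m) := by
  obtain ⟨g', hg'⟩ := (IsPrincipalIdealRing.principal (Ideal.span (Set.range m)))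
  rw [show Submodule.span ℤ {g'} = Ideal.span {g'} from rfl] at hg'
  have hset : ({G} : Set ℤ) * Set.range m = Set.range fun p => G * m p := by
    rw [Set.singleton_mul]
    exact (Set.range_comp (G * ·) m).symm
  have hmul : Ideal.span {G} * Ideal.span (Set.range m) =
      Ideal.span (Set.range fun p => G * m p) := by
    rw [Ideal.span_mul_span', hset]
  rw [hg', Ideal.span_singleton_mul_span_singleton, h] at hmul
  have hassoc : Associated (G * g') G := Ideal.span_singleton_eq_span_singleton.mp hmul
  obtain ⟨u, hu⟩ := hassoc
  have h1 : g' * (u : ℤ) = 1 := by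
    have h2 : G * (g' * (u : ℤ)) = G * 1 := by rw [← mul_assoc, hu, mul_one]
    exact mul_left_cancel₀ hG h2
  rw [hg', Ideal.span_singleton_eq_top.mpr (IsUnit.of_mul_eq_one _ h1)]
  trivial

def cf (i : ℕ) (a : TP 3) : ℤ :=
  (AdjoinRoot.modByMonicHom (g := (X : Polynomial ℤ)^3) (monic_X_pow 3) a).coeff i

lemma cf_mk (i : ℕ) (f : Polynomial ℤ) (hi : i < 3) :
    cf i (Ideal.Quotient.mk _ f) = f.coeff i := by
  unfold cf
  rw [show (Ideal.Quotient.mk _ f : TP 3) = AdjoinRoot.mk _ f from rfl,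
    AdjoinRoot.modByMonicHom_mk,
    modByMonic_eq_sub_mul_div _ ((X : Polynomial ℤ) ^ 3), coeff_sub, coeff_X_pow_mul',
    if_neg (by omega)]
  ring

lemma poly_repr (a0 a1 a2 : ℤ) :
    (a0 : TP 3) + (a1 : TP 3) * xx 3 + (a2 : TP 3) * xx 3 ^ 2 =
      Ideal.Quotient.mk _ (C a0 + C a1 * X + C a2 * X ^ 2) := by
  have h : ∀ m : ℤ, (m : TP 3) = Ideal.Quotient.mk _ (C m) := by
    intro m
    exact (RingHom.congr_fun
      (RingHom.ext_int (Int.castRingHom (TP 3))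
        ((Ideal.Quotient.mk (Ideal.span {(X:Polynomial ℤ)^3})).comp (C : ℤ →+* Polynomial ℤ))) m)
  simp only [h, xx, map_add, map_mul, map_pow]

lemma cf_eq (a0 a1 a2 : ℤ) (i : ℕ) (hi : i < 3) :
    cf i ((a0 : TP 3) + (a1 : TP 3) * xx 3 + (a2 : TP 3) * xx 3 ^ 2) =
      [a0, a1, a2].getD i 0 := by
  rw [poly_repr, cf_mk _ _ hi]
  interval_cases i <;> simp only [coeff_add, coeff_C_mul, coeff_C, coeff_X, coeff_X_pow, List.getD] <;> norm_num

lemma unique_repr {a0 a1 a2 b0 b1 b2 : ℤ}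
    (h : (a0 : TP 3) + (a1 : TP 3) * xx 3 + (a2 : TP 3) * xx 3 ^ 2 =
      (b0 : TP 3) + (b1 : TP 3) * xx 3 + (b2 : TP 3) * xx 3 ^ 2) :
    a0 = b0 ∧ a1 = b1 ∧ a2 = b2 := by
  refine ⟨?_, ?_, ?_⟩
  · have := congrArg (cf 0) h; rwa [cf_eq _ _ _ 0 (by norm_num), cf_eq _ _ _ 0 (by norm_num)] at this
  · have := congrArg (cf 1) h; rwa [cf_eq _ _ _ 1 (by norm_num), cf_eq _ _ _ 1 (by norm_num)] at this
  · have := congrArg (cf 2) h; rwa [cf_eq _ _ _ 2 (by norm_num), cf_eq _ _ _ 2 (by norm_num)] at this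

lemma exists_repr (a : TP 3) :
    ∃ a0 a1 a2 : ℤ, a = (a0 : TP 3) + (a1 : TP 3) * xx 3 + (a2 : TP 3) * xx 3 ^ 2 := by
  obtain ⟨f, rfl⟩ := Ideal.Quotient.mk_surjective a
  refine ⟨(f %ₘ X^3).coeff 0, (f %ₘ X^3).coeff 1, (f %ₘ X^3).coeff 2, ?_⟩
  rw [poly_repr, Ideal.Quotient.eq]
  have hd : (f %ₘ X^3).natDegree < 3 := by
    have := natDegree_modByMonic_lt f (monic_X_pow 3) (fun h => by
      have := congrArg natDegree h; simp at this)
    simpa using this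
  have h1 : f %ₘ X^3 = C ((f %ₘ X^3).coeff 0) + C ((f %ₘ X^3).coeff 1) * X + C ((f %ₘ X^3).coeff 2) * X^2 := by
    ext n
    simp only [coeff_add, coeff_C_mul, coeff_C, coeff_X_pow, coeff_X]
    match n, hd with
    | 0, hd => simp
    | 1, hd => simp
    | 2, hd => simp
    | (n+3), hd => simp [coeff_eq_zero_of_natDegree_lt (lt_of_lt_of_le hd (Nat.le_add_left 3 n)), coeff_C]
  rw [← h1, modByMonic_eq_sub_mul_div _ ((X : Polynomial ℤ) ^ 3)]
  rw [Ideal.mem_span_singleton]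
  exact ⟨f /ₘ X^3, by ring⟩

lemma x3 : (xx 3) ^ 3 = 0 := by
  rw [xx, ← map_pow, Ideal.Quotient.eq_zero_iff_mem]
  exact Ideal.subset_span rfl

lemma x4 : (xx 3) ^ 4 = 0 := by rw [pow_succ, x3, zero_mul]

lemma hom_ext {f g : TP 3 →+* TP 3} (h : f (xx 3) = g (xx 3)) : f = g := by
  have : f.comp (Ideal.Quotient.mk _) = g.comp (Ideal.Quotient.mk _) := by
    apply Polynomial.ringHom_ext'
    · exact RingHom.ext_int _ _
    · exact h
  refine RingHom.ext fun a => ?_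
  obtain ⟨q, rfl⟩ := Ideal.Quotient.mk_surjective a
  exact RingHom.congr_fun this q

lemma mem_span_xx_iff {a : TP 3} :
    a ∈ Ideal.span {xx 3} ↔ ∃ b c : ℤ, a = (b : TP 3) * xx 3 + (c : TP 3) * xx 3 ^ 2 := by
  rw [Ideal.mem_span_singleton]
  constructor
  · rintro ⟨s, rfl⟩
    obtain ⟨s0, s1, s2, rfl⟩ := exists_repr s
    exact ⟨s0, s1, by linear_combination (s2 : TP 3) * x3⟩
  · rintro ⟨b, c, rfl⟩
    exact ⟨(b : TP 3) + (c : TP 3) * xx 3, by ring⟩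

lemma mem_span_int_iff {m a0 a1 a2 : ℤ} :
    ((a0 : TP 3) + (a1 : TP 3) * xx 3 + (a2 : TP 3) * xx 3 ^ 2 ∈
      Ideal.span {(m : TP 3)}) ↔ m ∣ a0 ∧ m ∣ a1 ∧ m ∣ a2 := by
  rw [Ideal.mem_span_singleton]
  constructor
  · rintro ⟨s, hs⟩
    obtain ⟨s0, s1, s2, rfl⟩ := exists_repr s
    have : (a0 : TP 3) + (a1 : TP 3) * xx 3 + (a2 : TP 3) * xx 3 ^ 2 =
        ((m * s0 : ℤ) : TP 3) + ((m * s1 : ℤ) : TP 3) * xx 3 + ((m * s2 : ℤ) : TP 3) * xx 3 ^ 2 := by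
      push_cast
      rw [hs]; ring
    obtain ⟨h0, h1, h2⟩ := unique_repr this
    exact ⟨⟨s0, h0⟩, ⟨s1, h1⟩, ⟨s2, h2⟩⟩
  · rintro ⟨⟨s0, rfl⟩, ⟨s1, rfl⟩, ⟨s2, rfl⟩⟩
    exact ⟨(s0 : TP 3) + (s1 : TP 3) * xx 3 + (s2 : TP 3) * xx 3 ^ 2, by push_cast; ring⟩

lemma hom_apply (f : TP 3 →+* TP 3) (β γ : ℤ) (h : f (xx 3) = (β : TP 3) * xx 3 + (γ : TP 3) * xx 3 ^ 2)
    (a0 a1 a2 : ℤ) :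
    f ((a0 : TP 3) + (a1 : TP 3) * xx 3 + (a2 : TP 3) * xx 3 ^ 2) =
      (a0 : TP 3) + ((a1 * β : ℤ) : TP 3) * xx 3 + ((a1 * γ + a2 * β ^ 2 : ℤ) : TP 3) * xx 3 ^ 2 := by
  push_cast
  rw [map_add, map_add, map_mul, map_mul, map_pow, map_intCast, map_intCast, map_intCast, h]
  linear_combination ((a2:TP 3) * (2*β*γ + γ^2 * xx 3)) * x3

-- x^p = 0 for p ≥ 3
lemma xpow_eq_zero {p : ℕ} (hp : 3 ≤ p) : (xx 3) ^ p = 0 := by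
  obtain ⟨k, rfl⟩ := Nat.exists_eq_add_of_le hp
  rw [pow_add, x3, zero_mul]

def lift3 (w : TP 3) (hw : w ^ 3 = 0) : TP 3 →+* TP 3 :=
  Ideal.Quotient.lift _ (aeval w).toRingHom (by
    intro f hf
    rw [Ideal.mem_span_singleton] at hf
    obtain ⟨g, rfl⟩ := hf
    simp [map_mul, map_pow, aeval_X, hw])

lemma lift3_x (w : TP 3) (hw : w ^ 3 = 0) : lift3 w hw (xx 3) = w := by
  simp [lift3, xx, Ideal.Quotient.lift_mk]

lemma wpow3 (u v : ℤ) : ((u : TP 3) * xx 3 + (v : TP 3) * xx 3 ^ 2) ^ 3 = 0 := by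
  linear_combination ((u:TP 3)^3 + 3*(u:TP 3)^2*(v:TP 3)*xx 3 + 3*(u:TP 3)*(v:TP 3)^2*(xx 3)^2
    + (v:TP 3)^3*(xx 3)^3) * x3

def Phi (u v : ℤ) : TP 3 →+* TP 3 := lift3 _ (wpow3 u v)

lemma Phi_x (u v : ℤ) : Phi u v (xx 3) = (u : TP 3) * xx 3 + (v : TP 3) * xx 3 ^ 2 :=
  lift3_x _ _

lemma Phi_apply (u v a0 a1 a2 : ℤ) :
    Phi u v ((a0 : TP 3) + (a1 : TP 3) * xx 3 + (a2 : TP 3) * xx 3 ^ 2) =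
      (a0 : TP 3) + ((a1 * u : ℤ) : TP 3) * xx 3 + ((a1 * v + a2 * u ^ 2 : ℤ) : TP 3) * xx 3 ^ 2 :=
  hom_apply _ u v (Phi_x u v) a0 a1 a2

def sigmaUV (u v : ℤ) (hu : u * u = 1) : TP 3 ≃+* TP 3 :=
  RingEquiv.ofRingHom (Phi u v) (Phi u (-(u*v)))
    (by
      apply hom_ext
      have hc : ((u : TP 3))^2 = 1 := by
        have : ((u*u : ℤ) : TP 3) = ((1:ℤ) : TP 3) := by exact_mod_cast congrArg (fun t : ℤ => (t : TP 3)) hu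
        push_cast at this; linear_combination this
      rw [RingHom.comp_apply, RingHom.id_apply, Phi_x, show ((u : TP 3) * xx 3 + ((-(u*v) : ℤ) : TP 3) * xx 3 ^ 2) = ((0:ℤ) : TP 3) + ((u:ℤ) : TP 3) * xx 3 + ((-(u*v):ℤ) : TP 3) * xx 3 ^ 2 by push_cast; ring, Phi_apply]
      push_cast
      linear_combination (xx 3 - (u:TP 3)*(v:TP 3)*(xx 3)^2) * hc)
    (by
      apply hom_ext
      have hc : ((u : TP 3))^2 = 1 := by
        have : ((u*u : ℤ) : TP 3) = ((1:ℤ) : TP 3) := by exact_mod_cast congrArg (fun t : ℤ => (t : TP 3)) hu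
        push_cast at this; linear_combination this
      rw [RingHom.comp_apply, RingHom.id_apply, Phi_x, show ((u : TP 3) * xx 3 + ((v : ℤ) : TP 3) * xx 3 ^ 2) = ((0:ℤ) : TP 3) + ((u:ℤ) : TP 3) * xx 3 + ((v:ℤ) : TP 3) * xx 3 ^ 2 by push_cast; ring, Phi_apply]
      push_cast
      linear_combination (xx 3) * hc)

lemma sigmaUV_x (u v : ℤ) (hu : u * u = 1) :
    (sigmaUV u v hu) (xx 3) = (u : TP 3) * xx 3 + (v : TP 3) * xx 3 ^ 2 := Phi_x u v

lemma sigmaUV_symm_x (u v : ℤ) (hu : u * u = 1) :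
    (sigmaUV u v hu).symm (xx 3) = (u : TP 3) * xx 3 + ((-(u*v) : ℤ) : TP 3) * xx 3 ^ 2 := Phi_x u _

lemma hom_maps_span {f : TP 3 →+* TP 3} (h : f (xx 3) ∈ Ideal.span {xx 3}) :
    ∀ a ∈ Ideal.span {xx 3}, f a ∈ Ideal.span {xx 3} := by
  intro a ha
  rw [Ideal.mem_span_singleton] at *
  obtain ⟨s, rfl⟩ := ha
  obtain ⟨t, ht⟩ := h
  exact ⟨t * f s, by rw [map_mul, ht]; ring⟩

def conjFamily (R : AdamsFamily 3) (σ : TP 3 ≃+* TP 3)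
    (h1 : σ (xx 3) ∈ Ideal.span {xx 3}) (h2 : σ.symm (xx 3) ∈ Ideal.span {xx 3}) :
    AdamsFamily 3 where
  ψ p := σ.toRingHom.comp ((R.ψ p).comp σ.symm.toRingHom)
  maps_ideal p a ha := by
    simp only [RingHom.comp_apply]
    exact hom_maps_span (f := σ.toRingHom) h1 _
      (R.maps_ideal p _ (hom_maps_span (f := σ.symm.toRingHom) h2 _ ha))
  comm p q := by
    refine RingHom.ext fun a => ?_
    simp only [RingHom.comp_apply, RingEquiv.toRingHom_eq_coe, RingHom.coe_coe,
      RingEquiv.symm_apply_apply]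
    have := RingHom.congr_fun (R.comm p q) (σ.symm a)
    simp only [RingHom.comp_apply] at this
    rw [this]
  frob p a := by
    have h := R.frob p (σ.symm a)
    rw [Ideal.mem_span_singleton] at *
    obtain ⟨s, hs⟩ := h
    refine ⟨σ s, ?_⟩
    have := congrArg σ hs
    simp only [map_sub, map_mul, map_pow, RingEquiv.apply_symm_apply, map_natCast] at this
    simpa [RingHom.comp_apply] using this

lemma conjIso' (R : AdamsFamily 3) (σ : TP 3 ≃+* TP 3)
    (h1 : σ (xx 3) ∈ Ideal.span {xx 3}) (h2 : σ.symm (xx 3) ∈ Ideal.span {xx 3}) :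
    ∃ σ' : TP 3 ≃+* TP 3,
    (Ideal.span {xx 3}).map σ'.toRingHom = Ideal.span {xx 3} ∧
    ∀ p : Nat.Primes, σ'.toRingHom.comp (R.ψ p) = ((conjFamily R σ h1 h2).ψ p).comp σ'.toRingHom := by
  refine ⟨σ, ?_, fun p => ?_⟩
  · apply le_antisymm
    · rw [Ideal.map_le_iff_le_comap]
      intro a ha
      exact hom_maps_span (f := σ.toRingHom) h1 _ ha
    · rw [Ideal.span_le]
      rintro y hy
      rw [Set.mem_singleton_iff] at hy
      subst hy
      have hm : σ (σ.symm (xx 3)) ∈ Ideal.map σ.toRingHom (Ideal.span {xx 3}) :=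
        Ideal.mem_map_of_mem _ h2
      simpa using hm
  · refine RingHom.ext fun a => ?_
    simp [conjFamily, RingHom.comp_apply]


lemma conjFamily_ψ (R : AdamsFamily 3) (σ : TP 3 ≃+* TP 3)
    (h1 : σ (xx 3) ∈ Ideal.span {xx 3}) (h2 : σ.symm (xx 3) ∈ Ideal.span {xx 3})
    (p : Nat.Primes) (a : TP 3) :
    (conjFamily R σ h1 h2).ψ p a = σ (R.ψ p (σ.symm a)) := rfl

lemma conjIso (R : AdamsFamily 3) (σ : TP 3 ≃+* TP 3)
    (h1 : σ (xx 3) ∈ Ideal.span {xx 3}) (h2 : σ.symm (xx 3) ∈ Ideal.span {xx 3}) :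
    AdamsIso R (conjFamily R σ h1 h2) := conjIso' R σ h1 h2

lemma xx_mem_span : xx 3 ∈ Ideal.span {xx 3} := Ideal.subset_span rfl

theorem stmt7 (R : AdamsFamily 3) :
    (∃ (S : AdamsFamily 3) (c : Nat.Primes → ℤ),
      Int.ModEq 2 (c P2) 1 ∧ (∀ p : Nat.Primes, 2 < (p : ℕ) → ((p : ℕ) : ℤ) ∣ c p) ∧
      (∀ p : Nat.Primes, S.ψ p (xx 3) = (c p : TP 3) * xx 3 ^ 2) ∧ AdamsIso R S) ∨
    (∃ (S : AdamsFamily 3) (b : Nat.Primes → ℤ) (k G : ℤ),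
      CondA b ∧
      Ideal.span (Set.range fun p : Nat.Primes => b p * (b p - 1)) = Ideal.span {G} ∧
      0 ≤ G ∧ Odd k ∧ 1 ≤ k ∧ 2 * k ≤ G ∧
      (∀ p : Nat.Primes, CondBPrime b p → ((p : ℕ) : ℤ) ∣ k) ∧
      (∀ p : Nat.Primes, S.ψ p (xx 3) =
          (b p : TP 3) * xx 3 + ((k * (b p * (b p - 1)) / G : ℤ) : TP 3) * xx 3 ^ 2) ∧
      AdamsIso R S) := by
  classical
  -- extract coefficients of ψ p x
  choose b c hbc using fun p => mem_span_xx_iff.mp (R.maps_ideal p _ xx_mem_span)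
  -- frobenius conditions
  have hfrob : ∀ p : Nat.Primes, ∀ d : ℤ,
      ((xx 3)^(p:ℕ) = (d : TP 3) * xx 3 ^ 2) →
      ((p:ℕ):ℤ) ∣ b p ∧ ((p:ℕ):ℤ) ∣ (c p - d) := by
    intro p d hd
    have h := R.frob p (xx 3)
    rw [hbc p, hd] at h
    have hform : (b p : TP 3) * xx 3 + (c p : TP 3) * xx 3 ^ 2 - (d : TP 3) * xx 3 ^ 2 =
        ((0:ℤ) : TP 3) + (b p : TP 3) * xx 3 + ((c p - d : ℤ) : TP 3) * xx 3 ^ 2 := by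
      push_cast; ring
    rw [hform] at h
    rw [show (((p:ℕ):ℕ) : TP 3) = (((p:ℕ):ℤ) : TP 3) by push_cast; ring] at h
    exact ⟨(mem_span_int_iff.mp h).2.1, (mem_span_int_iff.mp h).2.2⟩
  have hfrob_odd : ∀ p : Nat.Primes, 2 < (p:ℕ) → ((p:ℕ):ℤ) ∣ b p ∧ ((p:ℕ):ℤ) ∣ c p := by
    intro p hp
    have := hfrob p 0 (by
      rw [xpow_eq_zero (by omega)]; push_cast; ring)
    simpa using this
  have hfrob2 : (2:ℤ) ∣ b P2 ∧ (2:ℤ) ∣ (c P2 - 1) := by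
    have := hfrob P2 1 (by
      show (xx 3)^(2:ℕ) = _
      push_cast; ring)
    exact_mod_cast this
  -- p ∣ b p for all p
  have hdvd_b : ∀ p : Nat.Primes, ((p:ℕ):ℤ) ∣ b p := by
    intro p
    rcases lt_or_eq_of_le p.2.two_le with hp | hp
    · exact (hfrob_odd p hp).1
    · have : p = P2 := Subtype.ext hp.symm
      rw [this]; exact_mod_cast hfrob2.1
  -- commutation relation
  have hcomm : ∀ p q : Nat.Primes, c p * (b q * (b q - 1)) = c q * (b p * (b p - 1)) := by
    intro p q
    have h := RingHom.congr_fun (R.comm p q) (xx 3)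
    simp only [RingHom.comp_apply] at h
    rw [hbc q, hbc p] at h
    rw [show ((b q : TP 3) * xx 3 + (c q : TP 3) * xx 3 ^ 2) =
      ((0:ℤ):TP 3) + (b q : TP 3) * xx 3 + (c q : TP 3) * xx 3 ^ 2 by push_cast; ring,
      hom_apply (R.ψ p) (b p) (c p) (hbc p)] at h
    rw [show ((b p : TP 3) * xx 3 + (c p : TP 3) * xx 3 ^ 2) =
      ((0:ℤ):TP 3) + (b p : TP 3) * xx 3 + (c p : TP 3) * xx 3 ^ 2 by push_cast; ring,
      hom_apply (R.ψ q) (b q) (c q) (hbc q)] at h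
    have := (unique_repr h).2.2
    nlinarith [this]
  have hc2odd : ¬ (2:ℤ) ∣ c P2 := by
    intro h
    have := hfrob2.2
    omega
  by_cases hall : ∀ p : Nat.Primes, b p = 0
  · -- left branch
    left
    refine ⟨R, c, ?_, fun p hp => (hfrob_odd p hp).2, fun p => ?_, ?_⟩
    · have h := hfrob2.2
      have : (2:ℤ) ∣ 1 - c P2 := by omega
      exact (Int.modEq_iff_dvd.mpr this)
    · rw [hbc p, hall p]; push_cast; ring
    · refine ⟨RingEquiv.refl _, ?_, fun p => ?_⟩
      · simp [Ideal.map_id]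
      · simp
  · -- right branch
    right
    push_neg at hall
    obtain ⟨p0, hp0⟩ := hall
    have hb2 : b P2 ≠ 0 := by
      intro h2
      have hco := hcomm p0 P2
      rw [h2] at hco
      simp at hco
      have hcp2 : c P2 ≠ 0 := fun h => hc2odd (h ▸ dvd_zero 2)
      rcases hco with hco | hco
      · exact hcp2 hco
      · rcases hco with h | h
        · exact hp0 h
        · have hb1 : b p0 = 1 := by omega
          rcases lt_or_eq_of_le p0.2.two_le with hp | hp
          · have := hdvd_b p0
            rw [hb1] at this
            have := Int.le_of_dvd one_pos this
            omega
          · have : p0 = P2 := Subtype.ext hp.symm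
            rw [this] at hp0
            exact hp0 h2
    have hb2' : b P2 * (b P2 - 1) ≠ 0 := by
      have h2b := hfrob2.1
      rcases h2b with ⟨w, hw⟩
      have : b P2 - 1 ≠ 0 := by omega
      exact mul_ne_zero hb2 this
    -- the gcd G
    obtain ⟨G, hGnonneg, hG⟩ := span_range_eq_span_abs_gen (fun p => b p * (b p - 1))
    have hGdvd : ∀ p : Nat.Primes, G ∣ b p * (b p - 1) := by
      intro p
      have : b p * (b p - 1) ∈ Ideal.span {G} := by
        rw [← hG]; exact Ideal.subset_span ⟨p, rfl⟩
      exact (Ideal.mem_span_singleton).mp this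
    have hGne : G ≠ 0 := by
      intro h0
      have := hGdvd P2
      rw [h0] at this
      exact hb2' (zero_dvd_iff.mp this)
    have hGpos : 0 < G := lt_of_le_of_ne hGnonneg (Ne.symm hGne)
    choose m hm using hGdvd
    -- extract t with c p = t * m p
    have hspan1 : (1 : ℤ) ∈ Ideal.span (Set.range m) := by
      apply one_mem_span_range_m hGne
      rw [← hG]
      congr 1
      ext z
      constructor
      · rintro ⟨p, rfl⟩; exact ⟨p, hm p⟩
      · rintro ⟨p, rfl⟩; exact ⟨p, (hm p).symm⟩
    obtain ⟨l, hl⟩ := Finsupp.mem_span_range_iff_exists_finsupp.mp hspan1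
    set t : ℤ := l.sum fun q a => a * c q with ht_def
    have hkey : ∀ p q : Nat.Primes, c q * m p = c p * m q := by
      intro p q
      have h := hcomm p q
      rw [hm p, hm q] at h
      have h2 : G * (c p * m q) = G * (c q * m p) := by ring_nf; ring_nf at h; linarith
      exact (mul_left_cancel₀ hGne h2).symm
    have ht : ∀ p : Nat.Primes, c p = t * m p := by
      intro p
      have step : (l.sum fun q a => a * c q) * m p = (l.sum fun q a => a • m q) * c p := by
        rw [Finsupp.sum_mul, Finsupp.sum_mul]
        apply Finsupp.sum_congr
        intro q _
        simp only [smul_eq_mul]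
        calc l q * c q * m p = l q * (c q * m p) := by ring
        _ = l q * (c p * m q) := by rw [hkey p q]
        _ = l q * m q * c p := by ring
      rw [ht_def, step, hl, one_mul]
    -- parity facts
    have hm2odd : ¬ (2:ℤ) ∣ m P2 := fun h => hc2odd (by rw [ht P2]; exact Dvd.dvd.mul_left h t)
    have htodd : ¬ (2:ℤ) ∣ t := fun h => hc2odd (by rw [ht P2]; exact Dvd.dvd.mul_right h (m P2))
    haveI : Fact (Nat.Prime 2) := ⟨Nat.prime_two⟩
    have h2a : ((2:ℕ):ℤ) ^ padicValInt 2 (b P2) ∣ b P2 := padicValInt_dvd (b P2)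
    have h2G : (2:ℤ) ^ padicValInt 2 (b P2) ∣ G := by
      have h1 : (2:ℤ) ^ padicValInt 2 (b P2) ∣ G * m P2 := by
        rw [← hm P2]
        exact dvd_mul_of_dvd_left (by exact_mod_cast h2a) _
      exact Int.prime_two.pow_dvd_of_dvd_mul_right _ hm2odd h1
    have ha21 : 1 ≤ padicValInt 2 (b P2) := by
      have h1 : ((2:ℕ):ℤ)^1 ∣ b P2 := by exact_mod_cast (by simpa using hfrob2.1 : (2:ℤ) ∣ b P2)
      rcases (padicValInt_dvd_iff 1 (b P2)).mp h1 with h | h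
      · exact absurd h hb2
      · exact h
    have hGeven : (2:ℤ) ∣ G :=
      dvd_trans (by simpa using pow_dvd_pow (2:ℤ) ha21) h2G
    have hcondA : CondA b := ⟨hb2, hdvd_b, fun p _ => dvd_trans h2G ⟨m p, hm p⟩⟩
    -- choice of k, u, v
    set r := t % G with hr_def
    have hr0 : 0 ≤ r := Int.emod_nonneg t hGne
    have hrlt : r < G := Int.emod_lt_of_pos t hGpos
    have htr : G * (t / G) + r = t := Int.mul_ediv_add_emod t G
    have hrodd : ¬ (2:ℤ) ∣ r := by
      intro h
      apply htodd
      have h2 : (2:ℤ) ∣ G * (t / G) := hGeven.mul_right _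
      have := dvd_add h2 h
      rwa [htr] at this
    obtain ⟨k, u, v, hu, hkeq, hkodd, hk1, h2k⟩ :
        ∃ k u v : ℤ, u * u = 1 ∧ k = u * (t - v * G) ∧ Odd k ∧ 1 ≤ k ∧ 2 * k ≤ G := by
      by_cases h2r : 2 * r ≤ G
      · refine ⟨r, 1, t / G, by ring, ?_, ?_, ?_, h2r⟩
        · rw [one_mul]
          linarith [htr, mul_comm G (t / G)]
        · rw [Int.odd_iff]; omega
        · omega
      · refine ⟨G - r, -1, t / G + 1, by ring, ?_, ?_, ?_, by omega⟩
        · have : (-1:ℤ) * (t - (t/G + 1)*G) = (t/G)*G + G - t := by ring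
          rw [this]
          linarith [htr, mul_comm G (t / G)]
        · rw [Int.odd_iff]; omega
        · omega
    -- condition (B) primes divide k
    have hB : ∀ p : Nat.Primes, CondBPrime b p → ((p:ℕ):ℤ) ∣ k := by
      rintro p ⟨hp2, hbp, hval⟩
      haveI : Fact (Nat.Prime (p:ℕ)) := ⟨p.2⟩
      have hpZ : Prime ((p:ℕ):ℤ) := Nat.prime_iff_prime_int.mp p.2
      have he1 : 1 ≤ padicValInt (p:ℕ) (b p) := by
        have h1 : ((p:ℕ):ℤ)^1 ∣ b p := by simpa using hdvd_b p
        rcases (padicValInt_dvd_iff 1 (b p)).mp h1 with h | h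
        · exact absurd h hbp
        · exact h
      have hpeG : ((p:ℕ):ℤ) ^ padicValInt (p:ℕ) (b p) ∣ G := by
        have hIle : Ideal.span (Set.range fun q : Nat.Primes => b q * (b q - 1)) ≤
            Ideal.span {((p:ℕ):ℤ) ^ padicValInt (p:ℕ) (b p)} := by
          rw [Ideal.span_le]
          rintro z ⟨q, rfl⟩
          rw [SetLike.mem_coe, Ideal.mem_span_singleton]
          by_cases hq : b q = 0
          · simp [hq]
          · rw [padicValInt_dvd_iff]
            right
            rw [hval]
            exact Nat.sInf_le ⟨q, hq, rfl⟩
        have hGmem : G ∈ Ideal.span {((p:ℕ):ℤ) ^ padicValInt (p:ℕ) (b p)} :=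
          hIle (by rw [hG]; exact Ideal.subset_span rfl)
        exact Ideal.mem_span_singleton.mp hGmem
      have hpG : ((p:ℕ):ℤ) ∣ G :=
        dvd_trans (by simpa using pow_dvd_pow ((p:ℕ):ℤ) he1) hpeG
      have hpb1 : ¬ ((p:ℕ):ℤ) ∣ (b p - 1) := by
        intro h
        have h1 : ((p:ℕ):ℤ) ∣ 1 := by
          have := dvd_sub (hdvd_b p) h
          simpa using this
        have := Int.le_of_dvd one_pos h1
        have := p.2.two_le
        omega
      have hmp : ¬ ((p:ℕ):ℤ) ∣ m p := by
        intro h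
        have h1 : ((p:ℕ):ℤ) ^ (padicValInt (p:ℕ) (b p) + 1) ∣ G * m p := by
          rw [pow_succ]
          exact mul_dvd_mul hpeG h
        rw [← hm p] at h1
        have h2 : ((p:ℕ):ℤ) ^ (padicValInt (p:ℕ) (b p) + 1) ∣ b p :=
          hpZ.pow_dvd_of_dvd_mul_right _ hpb1 h1
        rcases (padicValInt_dvd_iff _ (b p)).mp h2 with h3 | h3
        · exact hbp h3
        · omega
      have hpt : ((p:ℕ):ℤ) ∣ t := by
        have hpc : ((p:ℕ):ℤ) ∣ c p := (hfrob_odd p hp2).2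
        rw [ht p] at hpc
        rcases hpZ.dvd_mul.mp hpc with h | h
        · exact h
        · exact absurd h hmp
      rw [hkeq]
      exact dvd_mul_of_dvd_right (dvd_sub hpt (hpG.mul_left v)) u
    -- construct S
    have hx1 : (sigmaUV u v hu) (xx 3) ∈ Ideal.span {xx 3} := by
      rw [sigmaUV_x]
      exact mem_span_xx_iff.mpr ⟨u, v, rfl⟩
    have hx2 : (sigmaUV u v hu).symm (xx 3) ∈ Ideal.span {xx 3} := by
      rw [sigmaUV_symm_x]
      exact mem_span_xx_iff.mpr ⟨u, -(u*v), rfl⟩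
    refine ⟨conjFamily R (sigmaUV u v hu) hx1 hx2, b, k, G, hcondA, hG, hGnonneg, hkodd, hk1,
      h2k, hB, fun p => ?_, conjIso R (sigmaUV u v hu) hx1 hx2⟩
    -- compute S.ψ p (x)
    have hdiv : k * (b p * (b p - 1)) / G = k * m p := by
      rw [hm p, show k * (G * m p) = G * (k * m p) by ring, Int.mul_ediv_cancel_left _ hGne]
    have e1 : u * b p * u = b p := by
      rw [show u * b p * u = b p * (u*u) by ring, hu, mul_one]
    have e2 : u * b p * v + (u * c p + (-(u*v)) * (b p)^2) * u^2 = k * m p := by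
      linear_combination (u*(t*(m p) - v*(b p) - v*G*(m p))) * hu + u^3 * (ht p)
        + (-(m p)) * hkeq + (-(u^3*v)) * (hm p)
    rw [conjFamily_ψ, sigmaUV_symm_x,
      show ((u:TP 3) * xx 3 + ((-(u*v) : ℤ) : TP 3) * xx 3 ^ 2) =
        ((0:ℤ):TP 3) + ((u:ℤ):TP 3) * xx 3 + ((-(u*v):ℤ):TP 3) * xx 3 ^ 2 by push_cast; ring,
      hom_apply (R.ψ p) (b p) (c p) (hbc p)]
    have hσ : ((sigmaUV u v hu).toRingHom) (xx 3) = (u : TP 3) * xx 3 + (v : TP 3) * xx 3 ^ 2 := by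
      simpa using sigmaUV_x u v hu
    rw [show ∀ y : TP 3, (sigmaUV u v hu) y = (sigmaUV u v hu).toRingHom y from fun y => rfl]
    rw [hom_apply _ u v hσ 0 (u * b p) (u * c p + -(u*v) * (b p)^2)]
    rw [show u * b p * u = b p from e1,
      show u * b p * v + (u * c p + -(u*v) * (b p)^2) * u^2 = k * m p from e2, hdiv]
    push_cast; ring
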